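/- Let Ω be a bounded Lipschitz domain, u ∈ H¹(Ω) the weak solution of Δu = 0 with u|_Γ = g ∈ H^{1/2}(Γ), and v ∈ H¹(Ω) harmonic. Then ‖∇(u−v)‖²_{L²(Ω)} = max over τ ∈ H(div,Ω) with div τ = 0 of (2⟨g − v|_Γ, τ·n|_Γ⟩_Γ − ‖τ‖²_{L²(Ω)}), where ⟨·,·⟩_Γ denotes the H^{1/2}(Γ)×H^{−1/2}(Γ) duality pairing; the unique maximizer is τ = ∇(u−v). -/
import Mathlib


open scoped RealInnerProductSpace

/-- Abstract Sobolev setting: `V = H¹(Ω)`, `L2v = L²(Ω;ℝ^d)`, `L2 = L²(Ω)`,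
`Ht = H^{1/2}(Γ)`, `Hm = H^{−1/2}(Γ)`, `Hd = H(div,Ω)`.
`grad` is the weak gradient, `emb` the embedding `H¹(Ω) ⊂ L²(Ω)`, `tr` the trace,
`toL2v` the embedding `H(div,Ω) ⊂ L²(Ω;ℝ^d)`, `dvg` the divergence,
`ntr` the normal trace `σ ↦ σ·n|_Γ`, and `pair` the `H^{1/2}×H^{−1/2}` duality pairing.
`hIBP` is the integration-by-parts formula
`⟪∇w, σ⟫_{L²} = ⟨w|_Γ, σ·n⟩_Γ − ⟪w, div σ⟫_{L²}` defining the normal trace.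
`τ0` realizes the fact that `∇(u−v) ∈ H(div,Ω)` with `div ∇(u−v) = 0` for harmonic `u−v`.

Statement: `‖∇(u−v)‖²_{L²(Ω)} = max { 2⟨g − v|_Γ, τ·n⟩_Γ − ‖τ‖²_{L²(Ω)} : τ ∈ H(div,Ω),
div τ = 0 }` and the unique maximizer is `τ = ∇(u−v)`. -/
theorem stmt4
    {V L2v L2 Ht Hm Hd : Type*}
    [AddCommGroup V] [Module ℝ V]
    [NormedAddCommGroup L2v] [InnerProductSpace ℝ L2v]
    [NormedAddCommGroup L2] [InnerProductSpace ℝ L2]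
    [AddCommGroup Ht] [Module ℝ Ht] [AddCommGroup Hm] [Module ℝ Hm]
    [AddCommGroup Hd] [Module ℝ Hd]
    (grad : V →ₗ[ℝ] L2v) (emb : V →ₗ[ℝ] L2) (tr : V →ₗ[ℝ] Ht)
    (toL2v : Hd →ₗ[ℝ] L2v) (dvg : Hd →ₗ[ℝ] L2) (ntr : Hd →ₗ[ℝ] Hm)
    (pair : Ht →ₗ[ℝ] Hm →ₗ[ℝ] ℝ)
    (hIBP : ∀ (w : V) (σ : Hd),
      ⟪grad w, toL2v σ⟫ = pair (tr w) (ntr σ) - ⟪emb w, dvg σ⟫)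
    (u v : V) (g : Ht) (hg : tr u = g)
    (hu : ∀ φ : V, tr φ = 0 → ⟪grad u, grad φ⟫ = 0)
    (hv : ∀ φ : V, tr φ = 0 → ⟪grad v, grad φ⟫ = 0)
    (τ0 : Hd) (hτ0 : toL2v τ0 = grad (u - v)) (hτ0d : dvg τ0 = 0) :
    IsGreatest
      {x : ℝ | ∃ τ : Hd, dvg τ = 0 ∧ x = 2 * pair (g - tr v) (ntr τ) - ‖toL2v τ‖ ^ 2}
      (‖grad (u - v)‖ ^ 2) ∧
    (∀ τ : Hd, dvg τ = 0 →
      2 * pair (g - tr v) (ntr τ) - ‖toL2v τ‖ ^ 2 = ‖grad (u - v)‖ ^ 2 →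
      toL2v τ = grad (u - v)) := by
  have key : ∀ τ : Hd, dvg τ = 0 →
      (pair (g - tr v) (ntr τ) : ℝ) = ⟪grad (u - v), toL2v τ⟫ := by
    intro τ hτ
    have h := hIBP (u - v) τ
    rw [hτ, inner_zero_right, sub_zero] at h
    rw [h, ← hg, ← map_sub]
  have sq : ∀ e t : L2v, 2 * ⟪e, t⟫ - ‖t‖ ^ 2 = ‖e‖ ^ 2 - ‖e - t‖ ^ 2 := by
    intro e t
    have : ‖e - t‖ ^ 2 = ‖e‖ ^ 2 - 2 * ⟪e, t⟫ + ‖t‖ ^ 2 := by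
      rw [← real_inner_self_eq_norm_sq, ← real_inner_self_eq_norm_sq,
        ← real_inner_self_eq_norm_sq, inner_sub_sub_self]
      rw [real_inner_comm t e]; ring
    linarith
  refine ⟨⟨⟨τ0, hτ0d, ?_⟩, ?_⟩, ?_⟩
  · rw [key τ0 hτ0d, hτ0, real_inner_self_eq_norm_sq]; ring
  · rintro x ⟨τ, hτ, rfl⟩
    rw [key τ hτ, sq]
    have := sq_nonneg ‖grad (u - v) - toL2v τ‖
    linarith
  · intro τ hτ heq
    rw [key τ hτ, sq] at heq
    have h2 : ‖grad (u - v) - toL2v τ‖ ^ 2 = 0 := by linarith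
    have := pow_eq_zero_iff (n := 2) (by norm_num) |>.mp h2
    have := norm_eq_zero.mp this
    exact (sub_eq_zero.mp this).symm
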